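/- Let f be a non-constant tropical meromorphic function and let a ∈ R satisfy a ≤ f(x) for all x ∈ R. Then T(r, f) ≤ N(r, −max{f, a}) + max{−a, 0} + f(0) for all r ≥ 0; in particular T(r,f) = N(r, −(f ⊕ a)) + O(1) as r → ∞. -/

import Mathlib

open Set Filter Topology

/-- A tropical meromorphic function: a continuous piecewise linear real function, i.e.
a continuous function that is affine on a one-sided neighbourhood of every point. -/
def TropMero (f : ℝ → ℝ) : Prop :=
  Continuous f ∧ ∀ x : ℝ, ∃ ε > (0 : ℝ),
    (∃ a b : ℝ, ∀ y ∈ Set.Ico x (x + ε), f y = a * y + b) ∧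
    (∃ a b : ℝ, ∀ y ∈ Set.Ioc (x - ε) x, f y = a * y + b)

/-- `ω_f(x)`: the jump of the derivative of `f` at `x` (right slope minus left slope).
`x` is a root of `f` if `ω_f(x) > 0` and a pole if `ω_f(x) < 0`. -/
noncomputable def omega (f : ℝ → ℝ) (x : ℝ) : ℝ :=
  derivWithin f (Set.Ici x) x - derivWithin f (Set.Iic x) x

/-- A tropical entire function: a tropical meromorphic function without poles,
equivalently a convex one. -/
def TropEntire (f : ℝ → ℝ) : Prop := TropMero f ∧ ConvexOn ℝ Set.univ f

/-- The tropical proximity function `m(r, f) = (f⁺(r) + f⁺(-r))/2`. -/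
noncomputable def mProx (f : ℝ → ℝ) (r : ℝ) : ℝ := (max (f r) 0 + max (f (-r)) 0) / 2

/-- The unintegrated counting function `n(t, f) = Σ_{|s| ≤ t, ω_f(s) < 0} |ω_f(s)|`. -/
noncomputable def nCount (f : ℝ → ℝ) (t : ℝ) : ℝ :=
  ∑ᶠ s ∈ {s : ℝ | |s| ≤ t ∧ omega f s < 0}, |omega f s|

/-- The tropical counting function `N(r, f) = (1/2) ∫₀^r n(t, f) dt`. -/
noncomputable def NCount (f : ℝ → ℝ) (r : ℝ) : ℝ := (1 / 2) * ∫ t in (0 : ℝ)..r, nCount f t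

/-- The tropical Nevanlinna characteristic `T(r, f) = m(r, f) + N(r, f)`. -/
noncomputable def Tchar (f : ℝ → ℝ) (r : ℝ) : ℝ := mProx f r + NCount f r

noncomputable def Rslp (f : ℝ → ℝ) (x : ℝ) : ℝ := derivWithin f (Set.Ici x) x
noncomputable def Lslp (f : ℝ → ℝ) (x : ℝ) : ℝ := derivWithin f (Set.Iic x) x

lemma omega_eq (f : ℝ → ℝ) (x : ℝ) : omega f x = Rslp f x - Lslp f x := rfl

lemma local_struct (f : ℝ → ℝ) (hf : TropMero f) (x : ℝ) :
    ∃ ε > (0:ℝ),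
      HasDerivWithinAt f (Rslp f x) (Ici x) x ∧
      HasDerivWithinAt f (Lslp f x) (Iic x) x ∧
      (∀ y ∈ Ioo x (x+ε), Rslp f y = Rslp f x ∧ Lslp f y = Rslp f x) ∧
      (∀ y ∈ Ioo (x-ε) x, Rslp f y = Lslp f x ∧ Lslp f y = Lslp f x) := by
  obtain ⟨ε, hε, ⟨a1, b1, h1⟩, ⟨a2, b2, h2⟩⟩ := hf.2 x
  have hg1 : ∀ y : ℝ, HasDerivAt (fun y : ℝ => a1 * y + b1) a1 y := fun y => by
    simpa using ((hasDerivAt_id y).const_mul a1).add_const b1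
  have hg2 : ∀ y : ℝ, HasDerivAt (fun y : ℝ => a2 * y + b2) a2 y := fun y => by
    simpa using ((hasDerivAt_id y).const_mul a2).add_const b2
  have hmemR : Ico x (x+ε) ∈ 𝓝[Ici x] x := by
    rw [← Ici_inter_Iio]
    exact inter_mem_nhdsWithin _ (Iio_mem_nhds (by linarith))
  have hmemL : Ioc (x-ε) x ∈ 𝓝[Iic x] x := by
    rw [show Ioc (x-ε) x = Iic x ∩ Ioi (x-ε) by rw [inter_comm, Ioi_inter_Iic]]
    exact inter_mem_nhdsWithin _ (Ioi_mem_nhds (by linarith))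
  have hR : HasDerivWithinAt f a1 (Ici x) x := by
    refine ((hg1 x).hasDerivWithinAt).congr_of_eventuallyEq ?_ ?_
    · exact Filter.eventuallyEq_of_mem hmemR (fun y hy => h1 y hy)
    · exact h1 x ⟨le_rfl, by linarith⟩
  have hL : HasDerivWithinAt f a2 (Iic x) x := by
    refine ((hg2 x).hasDerivWithinAt).congr_of_eventuallyEq ?_ ?_
    · exact Filter.eventuallyEq_of_mem hmemL (fun y hy => h2 y hy)
    · exact h2 x ⟨by linarith, le_rfl⟩
  have hRx : Rslp f x = a1 := hR.derivWithin (uniqueDiffOn_Ici x x Set.self_mem_Ici)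
  have hLx : Lslp f x = a2 := hL.derivWithin (uniqueDiffOn_Iic x x Set.self_mem_Iic)
  refine ⟨ε, hε, ?_, ?_, ?_, ?_⟩
  · rw [hRx]; exact hR
  · rw [hLx]; exact hL
  · intro y hy
    have hd : HasDerivAt f a1 y := by
      refine (hg1 y).congr_of_eventuallyEq ?_
      exact Filter.eventuallyEq_of_mem (Ioo_mem_nhds hy.1 hy.2)
        (fun z hz => h1 z ⟨hz.1.le, hz.2⟩)
    constructor
    · rw [hRx]; exact hd.hasDerivWithinAt.derivWithin (uniqueDiffOn_Ici y y Set.self_mem_Ici)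
    · rw [hRx]; exact hd.hasDerivWithinAt.derivWithin (uniqueDiffOn_Iic y y Set.self_mem_Iic)
  · intro y hy
    have hd : HasDerivAt f a2 y := by
      refine (hg2 y).congr_of_eventuallyEq ?_
      exact Filter.eventuallyEq_of_mem (Ioo_mem_nhds hy.1 hy.2)
        (fun z hz => h2 z ⟨hz.1, hz.2.le⟩)
    constructor
    · rw [hLx]; exact hd.hasDerivWithinAt.derivWithin (uniqueDiffOn_Ici y y Set.self_mem_Ici)
    · rw [hLx]; exact hd.hasDerivWithinAt.derivWithin (uniqueDiffOn_Iic y y Set.self_mem_Iic)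

lemma jump_finite (f : ℝ → ℝ) (hf : TropMero f) (u v : ℝ) :
    {s : ℝ | s ∈ Icc u v ∧ omega f s ≠ 0}.Finite := by
  have H : ∀ x : ℝ, ∃ U : Set ℝ, U ∈ 𝓝 x ∧ ∀ y ∈ U, y ≠ x → omega f y = 0 := by
    intro x
    obtain ⟨ε, hε, _, _, h3, h4⟩ := local_struct f hf x
    refine ⟨Ioo (x-ε) (x+ε), Ioo_mem_nhds (by linarith) (by linarith), ?_⟩
    intro y hy hyx
    rcases lt_trichotomy y x with h | h | h
    · rw [omega_eq, (h4 y ⟨hy.1, h⟩).1, (h4 y ⟨hy.1, h⟩).2, sub_self]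
    · exact absurd h hyx
    · rw [omega_eq, (h3 y ⟨h, hy.2⟩).1, (h3 y ⟨h, hy.2⟩).2, sub_self]
  choose U hU hU0 using H
  obtain ⟨T, _, hT2⟩ := (isCompact_Icc : IsCompact (Icc u v)).elim_nhds_subcover U
    (fun x _ => hU x)
  apply Set.Finite.subset T.finite_toSet
  intro s hs
  obtain ⟨x, hxT, hsU⟩ := mem_iUnion₂.mp (hT2 hs.1)
  rcases eq_or_ne s x with rfl | hne
  · exact hxT
  · exact absurd (hU0 x s hsU hne) hs.2

lemma Rslp_const (f : ℝ → ℝ) (hf : TropMero f) {u v : ℝ} (huv : u ≤ v)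
    (h0 : ∀ s, u < s → s ≤ v → omega f s = 0) : Rslp f v = Rslp f u := by
  set B := {w : ℝ | w ∈ Icc u v ∧ Rslp f w = Rslp f u} with hB
  have hBne : B.Nonempty := ⟨u, ⟨le_rfl, huv⟩, rfl⟩
  have hBbd : BddAbove B := ⟨v, fun w hw => hw.1.2⟩
  set c := sSup B with hc
  have hcu : u ≤ c := le_csSup hBbd ⟨⟨le_rfl, huv⟩, rfl⟩
  have hcv : c ≤ v := csSup_le hBne (fun w hw => hw.1.2)
  obtain ⟨ε, hε, _, _, h3, h4⟩ := local_struct f hf c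
  have hcB : Rslp f c = Rslp f u := by
    rcases eq_or_lt_of_le hcu with h | h
    · rw [← h]
    · have hLR : Lslp f c = Rslp f c := by
        have h1 := h0 c h hcv
        rw [omega_eq] at h1; linarith
      obtain ⟨w, hwB, hw⟩ := exists_lt_of_lt_csSup hBne
        (show max (c-ε) u < c from max_lt (by linarith) h)
      have hwc : w ≤ c := le_csSup hBbd hwB
      rcases eq_or_lt_of_le hwc with heq | hlt
      · rw [← heq]; exact hwB.2
      · have := (h4 w ⟨(le_max_left _ _).trans_lt hw, hlt⟩).1
        rw [← hwB.2, this, hLR]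
  rcases eq_or_lt_of_le hcv with h | h
  · rw [← h]; exact hcB
  · exfalso
    set y := min (c + ε/2) ((c+v)/2) with hy
    have hy1 : c < y := lt_min (by linarith) (by linarith)
    have hy2 : y < c + ε := (min_le_left _ _).trans_lt (by linarith)
    have hyv : y ≤ v := (min_le_right _ _).trans (by linarith)
    have hyR : Rslp f y = Rslp f c := (h3 y ⟨hy1, hy2⟩).1
    have hyB : y ∈ B := ⟨⟨hcu.trans hy1.le, hyv⟩, hyR.trans hcB⟩
    exact absurd (le_csSup hBbd hyB) (not_le.2 hy1)

def Jset (f : ℝ → ℝ) (u v : ℝ) : Set ℝ := {s : ℝ | u < s ∧ s ≤ v ∧ omega f s ≠ 0}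

lemma Jset_finite (f : ℝ → ℝ) (hf : TropMero f) (u v : ℝ) : (Jset f u v).Finite :=
  (jump_finite f hf u v).subset (fun s hs => ⟨⟨hs.1.le, hs.2.1⟩, hs.2.2⟩)

lemma sum_telescope (f : ℝ → ℝ) (hf : TropMero f) :
    ∀ (n : ℕ) (u v : ℝ), u ≤ v → (Jset_finite f hf u v).toFinset.card = n →
      ∑ s ∈ (Jset_finite f hf u v).toFinset, omega f s = Rslp f v - Rslp f u := by
  intro n
  induction n with
  | zero =>
    intro u v huv hcard
    rw [Finset.card_eq_zero.mp hcard, Finset.sum_empty,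
      Rslp_const f hf huv ?_, sub_self]
    intro s hs1 hs2
    by_contra hne
    have : s ∈ (Jset_finite f hf u v).toFinset :=
      (Set.Finite.mem_toFinset _).mpr ⟨hs1, hs2, hne⟩
    rw [Finset.card_eq_zero.mp hcard] at this
    exact absurd this (Finset.notMem_empty s)
  | succ n IH =>
    intro u v huv hcard
    set T := (Jset_finite f hf u v).toFinset with hT
    have hTne : T.Nonempty := Finset.card_pos.mp (by omega)
    set m := T.max' hTne with hm
    have hmJ : m ∈ Jset f u v := (Set.Finite.mem_toFinset _).mp (T.max'_mem hTne)
    obtain ⟨hum, hmv, hωm⟩ := hmJ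
    obtain ⟨ε, hε, _, _, h3, h4⟩ := local_struct f hf m
    have hRvm : Rslp f v = Rslp f m := by
      apply Rslp_const f hf hmv
      intro s hs1 hs2
      by_contra hne
      have hsT : s ∈ T := (Set.Finite.mem_toFinset _).mpr ⟨hum.trans hs1, hs2, hne⟩
      exact absurd (T.le_max' s hsT) (not_le.2 hs1)
    set W : Finset ℝ := insert (max u (m - ε/2)) (T.erase m) with hW
    have hWne : W.Nonempty := ⟨max u (m - ε/2), Finset.mem_insert_self _ _⟩
    set w := W.max' hWne with hw
    have hwu : u ≤ w := (le_max_left u _).trans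
      (W.le_max' _ (Finset.mem_insert_self _ _))
    have hwε : m - ε/2 ≤ w := (le_max_right u _).trans
      (W.le_max' _ (Finset.mem_insert_self _ _))
    have hwm : w < m := by
      rw [hw, Finset.max'_lt_iff]
      intro b hb
      rcases Finset.mem_insert.mp hb with rfl | hb2
      · exact max_lt hum (by linarith)
      · exact lt_of_le_of_ne (T.le_max' b (Finset.mem_of_mem_erase hb2))
          (Finset.ne_of_mem_erase hb2)
    have hwge : ∀ s ∈ T.erase m, s ≤ w := fun s hs =>
      W.le_max' s (Finset.mem_insert_of_mem hs)
    have hkey : (Jset_finite f hf u w).toFinset = T.erase m := by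
      ext s
      rw [Set.Finite.mem_toFinset, Finset.mem_erase, hT, Set.Finite.mem_toFinset]
      constructor
      · rintro ⟨h1, h2, h3'⟩
        exact ⟨by intro hsm; rw [hsm] at h2; linarith,
          h1, h2.trans (hwm.le.trans hmv), h3'⟩
      · rintro ⟨hne, h1, h2, h3'⟩
        refine ⟨h1, ?_, h3'⟩
        apply hwge
        rw [Finset.mem_erase, hT, Set.Finite.mem_toFinset]
        exact ⟨hne, h1, h2, h3'⟩
    have hIH := IH u w hwu (by
      rw [hkey, Finset.card_erase_of_mem (T.max'_mem hTne)]; omega)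
    rw [hkey] at hIH
    have hRw : Rslp f w = Lslp f m := (h4 w ⟨by linarith, hwm⟩).1
    have hsplit : T = insert m (T.erase m) := (Finset.insert_erase (T.max'_mem hTne)).symm
    rw [hsplit, Finset.sum_insert (Finset.notMem_erase m T), hIH, hRw, hRvm,
      omega_eq]
    ring

lemma omega_neg (f : ℝ → ℝ) (hf : TropMero f) (s : ℝ) :
    omega (fun x => -f x) s = - omega f s := by
  obtain ⟨ε, hε, hR, hL, _, _⟩ := local_struct f hf s
  have h1 : derivWithin (fun x => -f x) (Set.Ici s) s = -(Rslp f s) :=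
    (hR.neg).derivWithin (uniqueDiffOn_Ici s s Set.self_mem_Ici)
  have h2 : derivWithin (fun x => -f x) (Set.Iic s) s = -(Lslp f s) :=
    (hL.neg).derivWithin (uniqueDiffOn_Iic s s Set.self_mem_Iic)
  rw [omega, h1, h2, omega_eq]
  ring

lemma negset_finite (f : ℝ → ℝ) (hf : TropMero f) (t : ℝ) :
    {s : ℝ | |s| ≤ t ∧ omega f s < 0}.Finite :=
  (jump_finite f hf (-t) t).subset (fun s hs => ⟨abs_le.mp hs.1, ne_of_lt hs.2⟩)

lemma negset_finite' (f : ℝ → ℝ) (hf : TropMero f) (t : ℝ) :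
    {s : ℝ | |s| ≤ t ∧ omega (fun x => -f x) s < 0}.Finite :=
  (jump_finite f hf (-t) t).subset (fun s hs => by
    have h2 := hs.2
    rw [omega_neg f hf s, neg_lt_zero] at h2
    exact ⟨abs_le.mp hs.1, ne_of_gt h2⟩)

lemma nCount_mono (g : ℝ → ℝ)
    (hfin : ∀ t : ℝ, {s : ℝ | |s| ≤ t ∧ omega g s < 0}.Finite) :
    Monotone (nCount g) := by
  intro t1 t2 h
  rw [nCount, nCount, finsum_mem_eq_finite_toFinset_sum _ (hfin t1),
    finsum_mem_eq_finite_toFinset_sum _ (hfin t2)]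
  apply Finset.sum_le_sum_of_subset_of_nonneg
  · intro s hs
    rw [Set.Finite.mem_toFinset] at *
    exact ⟨hs.1.trans h, hs.2⟩
  · intro s _ _
    exact abs_nonneg _

lemma nCount_diff (f : ℝ → ℝ) (hf : TropMero f) (t : ℝ) (ht : 0 ≤ t) :
    nCount (fun x => -f x) t - nCount f t = Rslp f t - Lslp f (-t) := by
  have habs : ∀ s : ℝ, |s| ≤ t ↔ s ∈ Icc (-t) t := fun s => abs_le
  -- rewrite nCount (-f)
  have hQ : {s : ℝ | |s| ≤ t ∧ omega (fun x => -f x) s < 0}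
      = {s : ℝ | |s| ≤ t ∧ 0 < omega f s} := by
    ext s; simp [omega_neg f hf s]
  have hQfin : {s : ℝ | |s| ≤ t ∧ 0 < omega f s}.Finite := by
    rw [← hQ]; exact negset_finite' f hf t
  have hPfin := negset_finite f hf t
  have h1 : nCount (fun x => -f x) t = ∑ s ∈ hQfin.toFinset, omega f s := by
    rw [nCount]
    have : ∀ s : ℝ, |omega (fun x => -f x) s| = |omega f s| := fun s => by
      rw [omega_neg f hf s, abs_neg]
    simp_rw [this, hQ]
    rw [finsum_mem_eq_finite_toFinset_sum _ hQfin]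
    apply Finset.sum_congr rfl
    intro s hs
    rw [Set.Finite.mem_toFinset] at hs
    exact abs_of_pos hs.2
  have h2 : nCount f t = - ∑ s ∈ hPfin.toFinset, omega f s := by
    rw [nCount, finsum_mem_eq_finite_toFinset_sum _ hPfin, ← Finset.sum_neg_distrib]
    apply Finset.sum_congr rfl
    intro s hs
    rw [Set.Finite.mem_toFinset] at hs
    exact abs_of_neg hs.2
  have hJfin := jump_finite f hf (-t) t
  have hunion : hJfin.toFinset = hPfin.toFinset ∪ hQfin.toFinset := by
    ext s
    simp only [Set.Finite.mem_toFinset, Finset.mem_union, Set.mem_setOf_eq, habs]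
    constructor
    · rintro ⟨h1', h2'⟩
      rcases lt_or_gt_of_ne h2' with h | h
      · exact Or.inl ⟨h1', h⟩
      · exact Or.inr ⟨h1', h⟩
    · rintro (⟨h1', h2'⟩ | ⟨h1', h2'⟩)
      · exact ⟨h1', ne_of_lt h2'⟩
      · exact ⟨h1', ne_of_gt h2'⟩
  have hdisj : Disjoint hPfin.toFinset hQfin.toFinset := by
    rw [Finset.disjoint_left]
    intro s hs1 hs2
    rw [Set.Finite.mem_toFinset] at hs1 hs2
    exact absurd hs2.2 (not_lt.2 hs1.2.le)
  have hsum : ∑ s ∈ hJfin.toFinset, omega f s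
      = nCount (fun x => -f x) t - nCount f t := by
    rw [hunion, Finset.sum_union hdisj, h1, h2]; ring
  rw [← hsum]
  -- now relate the Icc sum to the telescoping sum plus omega (-t)
  have hJfin2 := Jset_finite f hf (-t) t
  have htele := sum_telescope f hf (hJfin2.toFinset.card) (-t) t (by linarith) rfl
  have hsplit : ∑ s ∈ hJfin.toFinset, omega f s
      = omega f (-t) + ∑ s ∈ hJfin2.toFinset, omega f s := by
    rcases eq_or_ne (omega f (-t)) 0 with h | h
    · rw [h, zero_add]
      apply Finset.sum_congr _ (fun _ _ => rfl)
      ext s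
      simp only [Set.Finite.mem_toFinset, Set.mem_setOf_eq, Jset]
      constructor
      · rintro ⟨⟨ha1, ha2⟩, h3⟩
        rcases eq_or_lt_of_le ha1 with rfl | hlt
        · exact absurd h h3
        · exact ⟨hlt, ha2, h3⟩
      · rintro ⟨h1', h2', h3'⟩
        exact ⟨⟨h1'.le, h2'⟩, h3'⟩
    · have hins : hJfin.toFinset = insert (-t) hJfin2.toFinset := by
        ext s
        simp only [Set.Finite.mem_toFinset, Set.mem_setOf_eq, Finset.mem_insert, Jset]
        constructor
        · rintro ⟨⟨ha1, ha2⟩, h3⟩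
          rcases eq_or_lt_of_le ha1 with rfl | hlt
          · exact Or.inl rfl
          · exact Or.inr ⟨hlt, ha2, h3⟩
        · rintro (rfl | ⟨h1', h2', h3'⟩)
          · exact ⟨⟨le_rfl, by linarith⟩, h⟩
          · exact ⟨⟨h1'.le, h2'⟩, h3'⟩
      have hnotmem : (-t) ∉ hJfin2.toFinset := by
        rw [Set.Finite.mem_toFinset]
        rintro ⟨h1', _, _⟩
        exact absurd rfl (ne_of_gt h1')
      rw [hins, Finset.sum_insert hnotmem]
    
  rw [hsplit, htele, omega_eq]
  ring

lemma jensen (f : ℝ → ℝ) (hf : TropMero f) (r : ℝ) (hr : 0 ≤ r) :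
    NCount (fun x => -f x) r - NCount f r = (f r + f (-r)) / 2 - f 0 := by
  have hint1 : IntervalIntegrable (nCount f) MeasureTheory.volume 0 r :=
    (nCount_mono f (negset_finite f hf)).intervalIntegrable
  have hint2 : IntervalIntegrable (nCount (fun x => -f x)) MeasureTheory.volume 0 r :=
    (nCount_mono _ (negset_finite' f hf)).intervalIntegrable
  have key : ∫ t in (0:ℝ)..r, (nCount (fun x => -f x) t - nCount f t)
      = (f r + f (-r)) - (f 0 + f (-0)) := by
    apply intervalIntegral.integral_eq_sub_of_hasDeriv_right_of_le hr
      (f := fun t => f t + f (-t))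
    · exact (hf.1.add (hf.1.comp continuous_neg)).continuousOn
    · intro t ht
      rw [nCount_diff f hf t ht.1.le]
      obtain ⟨_, _, hR, _, _, _⟩ := local_struct f hf t
      obtain ⟨_, _, _, hL, _, _⟩ := local_struct f hf (-t)
      have h1 : HasDerivWithinAt f (Rslp f t) (Ioi t) t := hR.mono Ioi_subset_Ici_self
      have h2 : HasDerivWithinAt (fun y : ℝ => f (-y)) (Lslp f (-t) * (-1)) (Ioi t) t := by
        apply HasDerivWithinAt.comp (h₂ := f) (h := fun y : ℝ => -y) t hL
          ((hasDerivAt_id t).neg.hasDerivWithinAt)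
        intro y hy
        simp only [mem_Iic]
        simp only [mem_Ioi] at hy
        linarith
      have := h1.add h2
      convert this using 1
      · rfl
      · ring
    · exact hint2.sub hint1
  rw [NCount, NCount, ← mul_sub, ← intervalIntegral.integral_sub hint2 hint1, key]
  norm_num
  ring


/-- Let `f` be a non-constant tropical meromorphic function and `a ∈ ℝ` with
`a ≤ f(x)` for all `x`. Then `T(r, f) ≤ N(r, 1∘ ⊘ (f ⊕ a)) + max{−a, 0} + f(0)` for
all `r ≥ 0`, and in particular `T(r, f) = N(r, 1∘ ⊘ (f ⊕ a)) + O(1)`: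
the difference `T(r, f) − N(r, 1∘ ⊘ (f ⊕ a))` is bounded for `r ≥ 0`. -/
theorem characteristic_le_counting_below_values (f : ℝ → ℝ) (a : ℝ)
    (hf : TropMero f) (hnc : ∃ x y : ℝ, f x ≠ f y) (ha : ∀ x : ℝ, a ≤ f x) :
    (∀ r : ℝ, 0 ≤ r →
      Tchar f r ≤ NCount (fun x => -(max (f x) a)) r + max (-a) 0 + f 0) ∧
    ∃ K : ℝ, ∀ r : ℝ, 0 ≤ r →
      |Tchar f r - NCount (fun x => -(max (f x) a)) r| ≤ K := by
  have hmaxeq : (fun x => -(max (f x) a)) = (fun x => -f x) :=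
    funext fun x => by rw [max_eq_left (ha x)]
  rw [hmaxeq]
  have hmm : ∀ x : ℝ, max x 0 - max (-x) 0 = x := fun x => by
    rcases le_total x 0 with h | h
    · simp [max_eq_right h, max_eq_left (neg_nonneg.2 h)]
    · simp [max_eq_left h, max_eq_right (neg_nonpos.2 h)]
  have key : ∀ r : ℝ, 0 ≤ r →
      Tchar f r - NCount (fun x => -f x) r = mProx (fun x => -f x) r + f 0 := by
    intro r hr
    have hj := jensen f hf r hr
    have h1 := hmm (f r)
    have h2 := hmm (f (-r))
    simp only [Tchar, mProx] at *
    linarith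
  have hm0 : ∀ r : ℝ, 0 ≤ mProx (fun x => -f x) r := by
    intro r
    have := le_max_right (-f r) 0
    have := le_max_right (-f (-r)) 0
    simp only [mProx]
    linarith
  have hma : ∀ r : ℝ, mProx (fun x => -f x) r ≤ max (-a) 0 := by
    intro r
    have h1 : max (-f r) 0 ≤ max (-a) 0 := max_le_max (neg_le_neg (ha r)) le_rfl
    have h2 : max (-f (-r)) 0 ≤ max (-a) 0 := max_le_max (neg_le_neg (ha (-r))) le_rfl
    simp only [mProx]
    linarith
  constructor
  · intro r hr
    have := key r hr
    have := hma r
    linarith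
  · refine ⟨max (-a) 0 + |f 0|, fun r hr => ?_⟩
    rw [key r hr]
    have h1 := hma r
    have h2 := hm0 r
    have h3 := le_abs_self (f 0)
    have h4 := neg_abs_le (f 0)
    rw [abs_le]
    constructor <;> [skip; skip] <;> nlinarith [le_max_right (-a) (0:ℝ)]
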